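/- arXiv:cs/0308027 — 2 statements merged into one kernel-verified Lean document; each statement's English description precedes it below -/
import Mathlib

section
/- In any (t,w)-threshold secret sharing scheme with perfect secrecy (any t shares determine the key, any t-1 shares give no information), the size of each participant's share space is at least the size of the key space. -/
/-- In any `(t,w)`-threshold secret sharing scheme with perfect secrecy
(any `t` shares determine the key, any `t-1` shares give no information),
the size of each participant's share space is at least the size of the key space. -/
theorem share_space_ge_key_space
    {K S R : Type*} [Fintype K] [Fintype S] [Nonempty R]
    {w t : ℕ} (ht : 0 < t) (htw : t ≤ w)
    (share : K → R → Fin w → S)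
    (hrec : ∀ B : Finset (Fin w), B.card = t →
      ∀ k k' r r', (∀ i ∈ B, share k r i = share k' r' i) → k = k')
    (hsec : ∀ B : Finset (Fin w), B.card = t - 1 →
      ∀ k k' r, ∃ r', ∀ i ∈ B, share k r i = share k' r' i) :
    Fintype.card K ≤ Fintype.card S := by
  classical
  rcases isEmpty_or_nonempty K with hK | hK
  · simp [Fintype.card_eq_zero]
  obtain ⟨k₀⟩ := hK
  obtain ⟨r₀⟩ := ‹Nonempty R›
  obtain ⟨B, -, hB⟩ := Finset.exists_subset_card_eq (s := (Finset.univ : Finset (Fin w))) (n := t)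
    (by simpa using htw)
  obtain ⟨i₀, hi₀⟩ := Finset.card_pos.mp (hB ▸ ht)
  set B' := B.erase i₀ with hB'
  have hB'card : B'.card = t - 1 := by
    rw [hB', Finset.card_erase_of_mem hi₀, hB]
  choose r' hr' using fun k => hsec B' hB'card k₀ k r₀
  have hinj : Function.Injective (fun k => share k (r' k) i₀) := by
    intro a b hab
    apply hrec B hB a b (r' a) (r' b)
    intro i hi
    rcases eq_or_ne i i₀ with rfl | hne
    · exact hab
    · rw [← hr' a i (Finset.mem_erase.mpr ⟨hne, hi⟩),
        ← hr' b i (Finset.mem_erase.mpr ⟨hne, hi⟩)]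
  exact Fintype.card_le_of_injective _ hinj
end

section
/- Lagrange-style integer interpolation used in Shoup's scheme: let S be a set of t distinct points in {0,…,w} and Δ = w!. For i ∈ {0,…,w}\S and j ∈ S, the scaled Lagrange coefficient λ^S_{i,j} = Δ · ∏_{j'∈S, j'≠j} (i − j′)/(j − j′) is an integer. -/
private lemma prod_desc (n : ℕ) : ∏ k ∈ Finset.range n, ((n : ℤ) - k) = n.factorial := by
  rw [← Finset.prod_range_reflect]
  have : ∀ k ∈ Finset.range n, ((n : ℤ) - (n - 1 - k : ℕ)) = ((k + 1 : ℕ) : ℤ) := by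
    intro k hk
    have hk' := Finset.mem_range.mp hk
    have : (n - 1 - k : ℕ) = n - 1 - k := rfl
    push_cast [Nat.cast_sub (by omega : 1 + k ≤ n)]
    omega
  rw [Finset.prod_congr rfl this, ← Nat.cast_prod]
  norm_cast
  exact Finset.prod_range_add_one_eq_factorial n

/-- Shoup's scaled Lagrange coefficients are integers: for `S ⊆ {0,…,w}` of size `t`,
`i ∉ S`, `j ∈ S`, and `Δ = w!`, the quantity
`Δ · ∏_{j'∈S, j'≠j} (i − j′)/(j − j′)` is an integer. -/
theorem shoup_lagrange_coefficient_integer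
    (w t : ℕ) (ht : 0 < t) (htw : t ≤ w)
    (S : Finset ℕ) (hS : S ⊆ Finset.range (w + 1)) (hcard : S.card = t)
    (i j : ℕ) (hi : i ∈ Finset.range (w + 1)) (hiS : i ∉ S) (hj : j ∈ S) :
    ∃ z : ℤ, (z : ℚ) =
      (Nat.factorial w : ℚ) *
        ∏ j' ∈ S.erase j, (((i : ℚ) - (j' : ℚ)) / ((j : ℚ) - (j' : ℚ))) := by
  classical
  have hjw : j ≤ w := by have := Finset.mem_range.mp (hS hj); omega
  set D : ℤ := ∏ j' ∈ S.erase j, ((j : ℤ) - j') with hDdef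
  set N : ℤ := ∏ j' ∈ S.erase j, ((i : ℤ) - j') with hNdef
  -- the full product over {0,…,w} \ {j}
  have hsplit : (Finset.range (w + 1)).erase j =
      Finset.range j ∪ Finset.Ico (j + 1) (w + 1) := by
    ext k
    simp only [Finset.mem_erase, Finset.mem_range, Finset.mem_union, Finset.mem_Ico]
    omega
  have hdisj : Disjoint (Finset.range j) (Finset.Ico (j + 1) (w + 1)) := by
    rw [Finset.disjoint_left]
    intro a ha hb
    simp only [Finset.mem_range] at ha
    simp only [Finset.mem_Ico] at hb
    omega
  have hP1 : ∏ k ∈ Finset.range j, ((j : ℤ) - k) = j.factorial := prod_desc j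
  have hP2 : ∏ k ∈ Finset.Ico (j + 1) (w + 1), ((j : ℤ) - k)
      = (-1) ^ (w - j) * (w - j).factorial := by
    rw [Finset.prod_Ico_eq_prod_range]
    have h1 : (w + 1) - (j + 1) = w - j := by omega
    rw [h1]
    have : ∀ k ∈ Finset.range (w - j), ((j : ℤ) - ((j + 1 + k : ℕ) : ℤ)) = -(((k : ℤ)) + 1) := by
      intro k hk; push_cast; ring
    rw [Finset.prod_congr rfl this]
    have : ∏ k ∈ Finset.range (w - j), (-(((k : ℤ)) + 1))
        = (-1) ^ (w - j) * ∏ k ∈ Finset.range (w - j), (((k : ℤ)) + 1) := by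
      calc ∏ k ∈ Finset.range (w - j), (-(((k : ℤ)) + 1))
          = ∏ k ∈ Finset.range (w - j), ((-1) * (((k : ℤ)) + 1)) :=
            Finset.prod_congr rfl (fun k _ => by ring)
        _ = (-1) ^ (w - j) * ∏ k ∈ Finset.range (w - j), (((k : ℤ)) + 1) := by
            rw [Finset.prod_mul_distrib, Finset.prod_const, Finset.card_range]
    rw [this]
    congr 1
    calc ∏ k ∈ Finset.range (w - j), (((k : ℤ)) + 1)
        = ((∏ k ∈ Finset.range (w - j), (k + 1) : ℕ) : ℤ) := by
          push_cast; exact Finset.prod_congr rfl (fun k _ => by ring)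
      _ = ((w - j).factorial : ℤ) := by
          rw [Finset.prod_range_add_one_eq_factorial]
  have hFull : ∏ k ∈ (Finset.range (w + 1)).erase j, ((j : ℤ) - k)
      = (-1) ^ (w - j) * (j.factorial * (w - j).factorial) := by
    rw [hsplit, Finset.prod_union hdisj, hP1, hP2]; ring
  have hDdvdFull : D ∣ ∏ k ∈ (Finset.range (w + 1)).erase j, ((j : ℤ) - k) :=
    Finset.prod_dvd_prod_of_subset _ _ _ (Finset.erase_subset_erase _ hS)
  have hFulldvd : (∏ k ∈ (Finset.range (w + 1)).erase j, ((j : ℤ) - k)) ∣ (w.factorial : ℤ) := by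
    rw [← abs_dvd, hFull, abs_mul, abs_pow, abs_neg, abs_one, one_pow, one_mul]
    rw [abs_of_nonneg (by positivity)]
    exact_mod_cast Int.natCast_dvd_natCast.mpr
      (Nat.factorial_mul_factorial_dvd_factorial hjw)
  have hDdvd : D ∣ (w.factorial : ℤ) := dvd_trans hDdvdFull hFulldvd
  refine ⟨N * ((w.factorial : ℤ) / D), ?_⟩
  have hcast : (((w.factorial : ℤ) / D : ℤ) : ℚ) = (w.factorial : ℚ) / (D : ℚ) := by
    exact Int.cast_div_charZero hDdvd
  push_cast [hcast]
  rw [Finset.prod_div_distrib]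
  have hN : ((N : ℤ) : ℚ) = ∏ j' ∈ S.erase j, ((i : ℚ) - j') := by
    rw [hNdef]; push_cast; rfl
  have hD : ((D : ℤ) : ℚ) = ∏ j' ∈ S.erase j, ((j : ℚ) - j') := by
    rw [hDdef]; push_cast; rfl
  rw [← hN, ← hD]
  ring
end
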